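/- Let G be a finite group with a normal Hall q'-subgroup N, let Q be a Sylow q-subgroup of G, and let U be a nilpotent self-normalizing subgroup of C_N(Q) (the centralizer of Q in N). Then QU is a nilpotent self-normalizing subgroup of G. -/

import Mathlib

/-- Let `G` be finite with a normal Hall `q'`-subgroup `N`,
`Q` a Sylow `q`-subgroup of `G`, and `U` a nilpotent subgroup of `C_N(Q)` that
is self-normalizing in `C_N(Q)`. Then `QU` is nilpotent and self-normalizing
in `G`. -/
theorem stmt_11 {G : Type*} [Group G] [Finite G]
    (q : ℕ) (hq : q.Prime)
    (N : Subgroup G) [N.Normal] (hN : ¬ q ∣ Nat.card N)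
    (hGN : IsPGroup q (G ⧸ N))
    (Q : Sylow q G)
    (U : Subgroup G)
    (hU : U ≤ Subgroup.centralizer ((Q : Subgroup G) : Set G) ⊓ N)
    (hUnil : Group.IsNilpotent U)
    (hUself : Subgroup.normalizer (U : Set G) ⊓ (Subgroup.centralizer ((Q : Subgroup G) : Set G) ⊓ N) = U) :
    Group.IsNilpotent ((Q : Subgroup G) ⊔ U : Subgroup G) ∧
    Subgroup.normalizer (((Q : Subgroup G) ⊔ U : Subgroup G) : Set G) = (Q : Subgroup G) ⊔ U := by
  haveI : Fact q.Prime := ⟨hq⟩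
  set Qs : Subgroup G := (Q : Subgroup G) with hQs
  -- elements of Q and U commute
  have hcomm : ∀ x ∈ Qs, ∀ u ∈ U, Commute x u := by
    intro x hx u hu
    exact ((hU hu).1 x hx)
  -- the multiplication map Q × U → G
  have hcomm' : ∀ (x : Qs) (u : U), Commute (Qs.subtype x) (U.subtype u) :=
    fun x u => hcomm x x.2 u u.2
  set φ : Qs × U →* G := MonoidHom.noncommCoprod Qs.subtype U.subtype hcomm' with hφ
  have hrange : φ.range = Qs ⊔ U := by
    apply le_antisymm
    · rintro _ ⟨⟨x, u⟩, rfl⟩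
      exact mul_mem (Subgroup.mem_sup_left x.2) (Subgroup.mem_sup_right u.2)
    · rw [sup_le_iff]
      constructor
      · intro x hx
        exact ⟨(⟨x, hx⟩, 1), by simp [hφ, MonoidHom.noncommCoprod_apply]⟩
      · intro u hu
        exact ⟨(1, ⟨u, hu⟩), by simp [hφ, MonoidHom.noncommCoprod_apply]⟩
  -- nilpotency
  haveI : Group.IsNilpotent Qs := Q.isPGroup'.isNilpotent
  haveI : Group.IsNilpotent U := hUnil
  have hnil : Group.IsNilpotent (Qs ⊔ U : Subgroup G) := by
    rw [← hrange]
    exact nilpotent_of_surjective φ.rangeRestrict φ.rangeRestrict_surjective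
  refine ⟨hnil, ?_⟩
  -- decomposition of elements of Q ⊔ U
  have hdec : ∀ h ∈ Qs ⊔ U, ∃ x ∈ Qs, ∃ u ∈ U, h = x * u := by
    intro h hh
    rw [← hrange] at hh
    obtain ⟨⟨x, u⟩, rfl⟩ := hh
    exact ⟨x, x.2, u, u.2, rfl⟩
  -- Q ∩ N = ⊥
  have hQN : Qs ⊓ N = ⊥ := by
    obtain ⟨k, hk⟩ := (Q.isPGroup'.to_inf_left (K := N)).exists_card_eq
    have hdvd : Nat.card (Qs ⊓ N : Subgroup G) ∣ Nat.card N :=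
      Subgroup.card_dvd_of_le inf_le_right
    rcases Nat.eq_zero_or_pos k with rfl | hkpos
    · rw [pow_zero] at hk
      exact Subgroup.eq_bot_of_card_eq _ hk
    · exfalso
      exact hN (dvd_trans (dvd_trans (dvd_pow_self q hkpos.ne') (hk ▸ dvd_rfl)) hdvd)
  -- coprimality
  have hcop : Nat.Coprime q (Nat.card N) := (hq.coprime_iff_not_dvd).mpr hN
  -- N ⊔ Q = ⊤
  have hNQtop : N ⊔ Qs = ⊤ := by
    rw [← Subgroup.index_eq_one]
    obtain ⟨n, hn⟩ := hGN.exists_card_eq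
    have h1 : (N ⊔ Qs).index ∣ N.index := Subgroup.index_dvd_of_le le_sup_left
    have h2 : (N ⊔ Qs).index ∣ Qs.index := Subgroup.index_dvd_of_le le_sup_right
    have hNindex : N.index = q ^ n := by
      rw [Subgroup.index_eq_card, hn]
    rw [hNindex] at h1
    obtain ⟨j, hj, hdj⟩ := (Nat.dvd_prime_pow hq).mp h1
    rcases Nat.eq_zero_or_pos j with rfl | hjpos
    · simpa using hdj
    · exfalso
      have : q ∣ Qs.index := dvd_trans (dvd_trans (dvd_pow_self q hjpos.ne') (hdj ▸ dvd_rfl)) h2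
      exact Q.not_dvd_index this
  -- any g normalizing Q ⊔ U conjugates Q into Q
  have hconjQ : ∀ g ∈ Subgroup.normalizer ((Qs ⊔ U : Subgroup G) : Set G), ∀ x ∈ Qs, g * x * g⁻¹ ∈ Qs := by
    intro g hg x hx
    have hgx : g * x * g⁻¹ ∈ Qs ⊔ U :=
      (Subgroup.mem_normalizer_iff.mp hg x).mp (Subgroup.mem_sup_left hx)
    obtain ⟨y, hy, u, hu, huy⟩ := hdec _ hgx
    obtain ⟨k, hk⟩ := Q.isPGroup' ⟨x, hx⟩
    have hxk : x ^ (q ^ k) = 1 := by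
      have := congrArg (Subgroup.subtype Qs) hk
      simpa using this
    have hgxk : (g * x * g⁻¹) ^ (q ^ k) = 1 := by
      rw [← MulAut.conj_apply, ← map_pow, hxk, map_one]
    rw [huy, (hcomm y hy u hu).mul_pow] at hgxk
    -- u ^ (q^k) ∈ Qs ⊓ N = ⊥
    have huk : u ^ (q ^ k) = 1 := by
      have h1 : u ^ (q ^ k) = (y ^ (q ^ k))⁻¹ := eq_inv_of_mul_eq_one_right hgxk
      have h1' : u ^ (q ^ k) ∈ Qs := by
        rw [h1]
        exact inv_mem (Subgroup.pow_mem _ hy _)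
      have h2 : u ^ (q ^ k) ∈ Qs ⊓ N := ⟨h1', Subgroup.pow_mem _ (hU hu).2 _⟩
      rw [hQN] at h2
      exact h2
    have hord1 : orderOf u ∣ q ^ k := orderOf_dvd_of_pow_eq_one huk
    have hord2 : orderOf u ∣ Nat.card N := N.orderOf_dvd_natCard (hU hu).2
    have hone : orderOf u = 1 :=
      Nat.eq_one_of_dvd_coprimes (hcop.pow_left k) hord1 hord2
    have hu1 : u = 1 := orderOf_eq_one_iff.mp hone
    rw [huy, hu1, mul_one]
    exact hy
  -- U = (Q ⊔ U) ⊓ N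
  have hUeq : U = (Qs ⊔ U) ⊓ N := by
    apply le_antisymm
    · exact le_inf le_sup_right (fun u hu => (hU hu).2)
    · rintro h ⟨hh, hhN⟩
      obtain ⟨x, hx, u, hu, rfl⟩ := hdec _ hh
      have hxN : x ∈ N := by
        have hxe : x = (x * u) * u⁻¹ := by group
        rw [hxe]
        exact mul_mem hhN (inv_mem (hU hu).2)
      have hb : x ∈ Qs ⊓ N := ⟨hx, hxN⟩
      rw [hQN] at hb
      rw [Subgroup.mem_bot] at hb
      rw [hb, one_mul]
      exact hu
  -- self-normalization
  apply le_antisymm _ Subgroup.le_normalizer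
  intro g hg
  have hginv : g⁻¹ ∈ Subgroup.normalizer ((Qs ⊔ U : Subgroup G) : Set G) := inv_mem hg
  -- g normalizes Q
  have hgQ : g ∈ Subgroup.normalizer (Qs : Set G) := by
    rw [Subgroup.mem_normalizer_iff]
    intro x
    constructor
    · exact hconjQ g hg x
    · intro hx
      have := hconjQ g⁻¹ hginv _ hx
      simpa [mul_assoc] using this
  -- g normalizes U
  have hgU : g ∈ Subgroup.normalizer (U : Set G) := by
    rw [Subgroup.mem_normalizer_iff]
    intro u
    constructor
    · intro hu
      rw [hUeq]
      refine ⟨(Subgroup.mem_normalizer_iff.mp hg u).mp (Subgroup.mem_sup_right hu), ?_⟩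
      exact Subgroup.Normal.conj_mem ‹N.Normal› u (hU hu).2 g
    · intro hu
      have h1 : g⁻¹ * (g * u * g⁻¹) * g⁻¹⁻¹ ∈ U := by
        rw [hUeq]
        exact ⟨(Subgroup.mem_normalizer_iff.mp hginv _).mp (Subgroup.mem_sup_right hu),
          Subgroup.Normal.conj_mem ‹N.Normal› _ (hU hu).2 g⁻¹⟩
      have he : g⁻¹ * (g * u * g⁻¹) * g⁻¹⁻¹ = u := by group
      rwa [he] at h1
  -- decompose g = n * x
  have hgmem : g ∈ ((N ⊔ Qs : Subgroup G) : Set G) := by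
    rw [hNQtop]; trivial
  rw [Subgroup.normal_mul] at hgmem
  obtain ⟨n, hn, x, hx, rfl⟩ := hgmem
  have hxQ : x ∈ Subgroup.normalizer (Qs : Set G) := Subgroup.le_normalizer hx
  have hne : n = (n * x) * x⁻¹ := by group
  have hnQ : n ∈ Subgroup.normalizer (Qs : Set G) := by
    rw [hne]; exact mul_mem hgQ (inv_mem hxQ)
  -- n centralizes Q
  have hnC : n ∈ Subgroup.centralizer (Qs : Set G) := by
    rw [Subgroup.mem_centralizer_iff]
    intro y hy
    have h1 : n * y * n⁻¹ ∈ Qs := (Subgroup.mem_normalizer_iff.mp hnQ y).mp hy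
    have h3 : (n * y * n⁻¹) * y⁻¹ ∈ N := by
      have he : (n * y * n⁻¹) * y⁻¹ = n * (y * n⁻¹ * y⁻¹) := by group
      rw [he]
      exact mul_mem hn (Subgroup.Normal.conj_mem ‹N.Normal› _ (Subgroup.inv_mem _ hn) y)
    have h4 : (n * y * n⁻¹) * y⁻¹ ∈ Qs ⊓ N := ⟨mul_mem h1 (Subgroup.inv_mem _ hy), h3⟩
    rw [hQN, Subgroup.mem_bot, mul_inv_eq_one] at h4
    calc y * n = (n * y * n⁻¹) * n := by rw [h4]
      _ = n * y := by group
  -- x normalizes U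
  have hxU : x ∈ Subgroup.normalizer (U : Set G) := by
    rw [Subgroup.mem_normalizer_iff]
    intro u
    constructor
    · intro hu
      have hc := hcomm x hx u hu
      have he : x * u * x⁻¹ = u := by
        rw [hc.eq, mul_assoc, mul_inv_cancel, mul_one]
      rw [he]; exact hu
    · intro hu
      have hc := hcomm x hx _ hu
      have he2 : x⁻¹ * (x * u * x⁻¹) * x = x * u * x⁻¹ := by
        rw [mul_assoc, ← hc.eq, ← mul_assoc, inv_mul_cancel, one_mul]
      have he : u = x⁻¹ * (x * u * x⁻¹) * x := by group
      rw [he, he2]; exact hu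
  have hnU : n ∈ Subgroup.normalizer (U : Set G) := by
    rw [hne]; exact mul_mem hgU (inv_mem hxU)
  have hnmem : n ∈ U := by
    rw [← hUself]; exact ⟨hnU, hnC, hn⟩
  exact mul_mem (Subgroup.mem_sup_right hnmem) (Subgroup.mem_sup_left hx)
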